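/- Hardy's inequality (k > 1 case): Let k > 1 and g : (0,1) → ℝ be such that ∫₀¹ s^k (g(s)² + g'(s)²) ds < ∞. Then there exists a constant C = C(k) such that ∫₀¹ s^{k-2} g(s)² ds ≤ C ∫₀¹ s^k (g(s)² + g'(s)²) ds. -/

import Mathlib

open MeasureTheory Set

private lemma hardy_amgm (k x u v : ℝ) (hx : 0 < x) :
    |x ^ (k-1) * (2 * u * v)| ≤ x ^ (k-2) * u^2 + x ^ k * v^2 := by
  have h1 : x ^ (k-2) = x ^ ((k-2)/2) * x ^ ((k-2)/2) := by
    rw [← Real.rpow_add hx]; ring_nf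
  have h2 : x ^ k = x ^ (k/2) * x ^ (k/2) := by
    rw [← Real.rpow_add hx]; ring_nf
  have h3 : x ^ (k-1) = x ^ ((k-2)/2) * x ^ (k/2) := by
    rw [← Real.rpow_add hx]; ring_nf
  rw [h1, h2, h3, abs_le]
  constructor <;> nlinarith [sq_nonneg (x ^ ((k-2)/2) * u + x ^ (k/2) * v),
    sq_nonneg (x ^ ((k-2)/2) * u - x ^ (k/2) * v)]

private lemma hardy_lowbd (k x u v : ℝ) (hk : 1 < k) (hx : 0 < x) :
    ((k-1)/2) * (x^(k-2)*u^2) - (2/(k-1)) * (x^k*v^2)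
      ≤ (k-1)*x^(k-2)*u^2 + x^(k-1)*(2*u)*v := by
  have hk1 : (0:ℝ) < k - 1 := by linarith
  have h1 : x ^ (k-2) = x ^ ((k-2)/2) * x ^ ((k-2)/2) := by
    rw [← Real.rpow_add hx]; ring_nf
  have h2 : x ^ k = x ^ (k/2) * x ^ (k/2) := by
    rw [← Real.rpow_add hx]; ring_nf
  have h3 : x ^ (k-1) = x ^ ((k-2)/2) * x ^ (k/2) := by
    rw [← Real.rpow_add hx]; ring_nf
  have key : 0 ≤ ((k-1)/2)*(x ^ ((k-2)/2) * u)^2 + 2*((x ^ ((k-2)/2) * u)*(x ^ (k/2) * v))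
      + (2/(k-1))*(x ^ (k/2) * v)^2 := by
    have heq : ((k-1)/2)*(x ^ ((k-2)/2) * u)^2 + 2*((x ^ ((k-2)/2) * u)*(x ^ (k/2) * v))
        + (2/(k-1))*(x ^ (k/2) * v)^2
        = ((k-1)*(x ^ ((k-2)/2) * u)+2*(x ^ (k/2) * v))^2 / (2*(k-1)) := by
      field_simp; ring
    rw [heq]; positivity
  rw [h1, h2, h3]
  nlinarith [key]

/-- Integrability of the derivative part. -/
private lemma hardy_int_w (k : ℝ) (g : ℝ → ℝ)
    (hI : IntegrableOn (fun s => s ^ k * (g s ^ 2 + deriv g s ^ 2)) (Ioo 0 1)) :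
    IntegrableOn (fun s => s ^ k * deriv g s ^ 2) (Ioo 0 1) := by
  apply Integrable.mono hI
  · exact ((measurable_id.pow measurable_const).aestronglyMeasurable.mul
      ((measurable_deriv g).pow_const 2).aestronglyMeasurable)
  · filter_upwards [ae_restrict_mem measurableSet_Ioo] with x hx
    have hx0 : (0:ℝ) ≤ x := hx.1.le
    have h0 : (0:ℝ) ≤ x ^ k := Real.rpow_nonneg hx0 k
    rw [Real.norm_eq_abs, Real.norm_eq_abs,
      abs_of_nonneg (mul_nonneg h0 (sq_nonneg _)),
      abs_of_nonneg (mul_nonneg h0 (by positivity))]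
    nlinarith [sq_nonneg (g x), sq_nonneg (deriv g x)]

/-- Integrability of the function part. -/
private lemma hardy_int_u (k : ℝ) (g : ℝ → ℝ) (hg : DifferentiableOn ℝ g (Ioo 0 1))
    (hI : IntegrableOn (fun s => s ^ k * (g s ^ 2 + deriv g s ^ 2)) (Ioo 0 1)) :
    IntegrableOn (fun s => s ^ k * g s ^ 2) (Ioo 0 1) := by
  apply Integrable.mono hI
  · exact ((measurable_id.pow measurable_const).aestronglyMeasurable.mul
      ((hg.continuousOn.pow 2).aestronglyMeasurable measurableSet_Ioo))
  · filter_upwards [ae_restrict_mem measurableSet_Ioo] with x hx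
    have hx0 : (0:ℝ) ≤ x := hx.1.le
    have h0 : (0:ℝ) ≤ x ^ k := Real.rpow_nonneg hx0 k
    rw [Real.norm_eq_abs, Real.norm_eq_abs,
      abs_of_nonneg (mul_nonneg h0 (sq_nonneg _)),
      abs_of_nonneg (mul_nonneg h0 (by positivity))]
    nlinarith [sq_nonneg (g x), sq_nonneg (deriv g x)]

set_option maxHeartbeats 1000000 in
/-- Key interval estimate. -/
private lemma hardy_key (k : ℝ) (hk : 1 < k) (g : ℝ → ℝ)
    (hg : DifferentiableOn ℝ g (Ioo 0 1))
    (hI : IntegrableOn (fun s => s ^ k * (g s ^ 2 + deriv g s ^ 2)) (Ioo 0 1))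
    (a b : ℝ) (ha : 0 < a) (hab : a < b) (hb : b < 1) :
    ((k-1)/2) * ∫ s in Ioo a b, s ^ (k-2) * g s ^ 2
      ≤ g b ^ 2 + (2/(k-1)) * ∫ s in Ioo (0:ℝ) 1, s ^ k * deriv g s ^ 2 := by
  have hk1 : (0:ℝ) < k - 1 := by linarith
  have hIccsub : Icc a b ⊆ Ioo 0 1 := fun x hx =>
    ⟨lt_of_lt_of_le ha hx.1, lt_of_le_of_lt hx.2 hb⟩
  have hIoosub : Ioo a b ⊆ Ioo 0 1 := Ioo_subset_Icc_self.trans hIccsub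
  set F : ℝ → ℝ := fun s => s ^ (k-1) * g s ^ 2 with hF_def
  set F' : ℝ → ℝ := fun s => (k-1)*s^(k-2)*g s^2 + s^(k-1)*(2*g s)*deriv g s with hF'_def
  have hgc : ContinuousOn g (Icc a b) := (hg.mono hIccsub).continuousOn
  have crpow : ∀ p : ℝ, ContinuousOn (fun s : ℝ => s ^ p) (Icc a b) := fun p x hx =>
    (Real.continuousAt_rpow_const x p (Or.inl (hIccsub hx).1.ne')).continuousWithinAt
  -- derivative of F
  have hF : ∀ x ∈ Icc a b, HasDerivAt F (F' x) x := by
    intro x hx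
    have hmem : x ∈ Ioo 0 1 := hIccsub hx
    have hx0 : (0:ℝ) < x := hmem.1
    have hgd : HasDerivAt g (deriv g x) x :=
      ((hg x hmem).differentiableAt (isOpen_Ioo.mem_nhds hmem)).hasDerivAt
    have h1 : HasDerivAt (fun s : ℝ => s ^ (k-1)) ((k-1) * x ^ (k-1-1)) x :=
      Real.hasDerivAt_rpow_const (Or.inl hx0.ne')
    have h2 := h1.mul (hgd.pow 2)
    rw [show k-1-1 = k-2 by ring] at h2
    convert h2 using 1
    · rfl
    · rfl
    · rfl
    · simp only [hF'_def, Pi.pow_apply, Nat.cast_ofNat, Nat.add_one_sub_one, pow_one]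
      ring
  -- integrability of F'
  have hiu : IntegrableOn (fun s => s^(k-2)*g s^2) (Icc a b) :=
    ((crpow (k-2)).mul (hgc.pow 2)).integrableOn_Icc
  have hiw : IntegrableOn (fun s => s^k*deriv g s^2) (Icc a b) :=
    (hardy_int_w k g hI).mono_set hIccsub
  have hiB : IntegrableOn (fun s => k*(s^(k-2)*g s^2) + s^k*deriv g s^2) (Icc a b) :=
    (hiu.const_mul k).add hiw
  have hFm : AEStronglyMeasurable F' (volume.restrict (Icc a b)) := by
    have c1 : ContinuousOn (fun x:ℝ => (k-1)*x^(k-2)*g x^2) (Icc a b) :=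
      (continuousOn_const.mul (crpow (k-2))).mul (hgc.pow 2)
    have c2 : ContinuousOn (fun x:ℝ => x^(k-1)*(2*g x)) (Icc a b) :=
      (crpow (k-1)).mul (continuousOn_const.mul hgc)
    exact (c1.aestronglyMeasurable measurableSet_Icc).add
      ((c2.aestronglyMeasurable measurableSet_Icc).mul
        (measurable_deriv g).aestronglyMeasurable)
  have hiF' : IntegrableOn F' (Icc a b) := by
    apply Integrable.mono hiB hFm
    filter_upwards [ae_restrict_mem measurableSet_Icc] with x hx
    have hx0 : (0:ℝ) < x := (hIccsub hx).1
    have hu0 : (0:ℝ) ≤ x^(k-2)*g x^2 :=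
      mul_nonneg (Real.rpow_nonneg hx0.le _) (sq_nonneg _)
    have hw0 : (0:ℝ) ≤ x^k*deriv g x^2 :=
      mul_nonneg (Real.rpow_nonneg hx0.le _) (sq_nonneg _)
    have hB0 : (0:ℝ) ≤ k*(x^(k-2)*g x^2) + x^k*deriv g x^2 :=
      add_nonneg (mul_nonneg (by linarith) hu0) hw0
    rw [Real.norm_eq_abs, Real.norm_eq_abs, abs_of_nonneg hB0]
    have habs := hardy_amgm k x (g x) (deriv g x) hx0
    calc |F' x| ≤ |(k-1)*x^(k-2)*g x^2| + |x^(k-1)*(2*g x)*deriv g x| := abs_add_le _ _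
      _ ≤ k*(x^(k-2)*g x^2) + x^k*deriv g x^2 := by
          rw [abs_of_nonneg (by nlinarith [sq_nonneg (g x)] :
            (0:ℝ) ≤ (k-1)*x^(k-2)*g x^2),
            show x^(k-1)*(2*g x)*deriv g x = x^(k-1)*(2*g x*deriv g x) by ring]
          nlinarith [habs]
  have hFi : IntervalIntegrable F' volume a b := by
    rw [intervalIntegrable_iff', uIcc_of_le hab.le]
    exact hiF'
  have heq : ∫ x in a..b, F' x = F b - F a :=
    intervalIntegral.integral_eq_sub_of_hasDerivAt
      (fun x hx => hF x (by rwa [uIcc_of_le hab.le] at hx)) hFi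
  have e1 : ∫ x in a..b, F' x = ∫ x in Ioo a b, F' x := by
    rw [intervalIntegral.integral_of_le hab.le, integral_Ioc_eq_integral_Ioo]
  -- pointwise lower bound and monotonicity
  have hiuo : IntegrableOn (fun s => s^(k-2)*g s^2) (Ioo a b) :=
    hiu.mono_set Ioo_subset_Icc_self
  have hiwo : IntegrableOn (fun s => s^k*deriv g s^2) (Ioo a b) :=
    hiw.mono_set Ioo_subset_Icc_self
  have hLi : IntegrableOn
      (fun x => ((k-1)/2)*(x^(k-2)*g x^2) - (2/(k-1))*(x^k*deriv g x^2)) (Ioo a b) :=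
    (hiuo.const_mul _).sub (hiwo.const_mul _)
  have hmono : ∫ x in Ioo a b, (((k-1)/2)*(x^(k-2)*g x^2) - (2/(k-1))*(x^k*deriv g x^2))
      ≤ ∫ x in Ioo a b, F' x := by
    apply setIntegral_mono_on hLi (hiF'.mono_set Ioo_subset_Icc_self) measurableSet_Ioo
    intro x hx
    exact hardy_lowbd k x (g x) (deriv g x) hk (hIoosub hx).1
  have hsplit : ∫ x in Ioo a b, (((k-1)/2)*(x^(k-2)*g x^2) - (2/(k-1))*(x^k*deriv g x^2))
      = ((k-1)/2) * (∫ x in Ioo a b, x^(k-2)*g x^2)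
        - (2/(k-1)) * (∫ x in Ioo a b, x^k*deriv g x^2) := by
    rw [integral_sub (hiuo.const_mul _) (hiwo.const_mul _), integral_const_mul,
      integral_const_mul]
  -- endpoint bounds
  have hFb : F b - F a ≤ g b ^ 2 := by
    have hFa : (0:ℝ) ≤ F a := mul_nonneg (Real.rpow_nonneg ha.le _) (sq_nonneg _)
    have hFble : F b ≤ g b ^ 2 := by
      have h1 : b ^ (k-1) ≤ 1 := Real.rpow_le_one (ha.trans hab).le hb.le (by linarith)
      calc F b = b^(k-1) * g b^2 := rfl
        _ ≤ 1 * g b ^2 := mul_le_mul_of_nonneg_right h1 (sq_nonneg _)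
        _ = g b ^ 2 := one_mul _
    linarith
  have hwsub : ∫ x in Ioo a b, x^k*deriv g x^2 ≤ ∫ x in Ioo (0:ℝ) 1, x^k*deriv g x^2 := by
    apply setIntegral_mono_set (hardy_int_w k g hI)
    · rw [Filter.EventuallyLE, ae_restrict_iff' measurableSet_Ioo]
      filter_upwards with x hx
      exact mul_nonneg (Real.rpow_nonneg hx.1.le _) (sq_nonneg _)
    · exact Filter.Eventually.of_forall hIoosub
  have hIab : ∫ x in Ioo a b, F' x ≤ g b ^ 2 := by rw [← e1, heq]; exact hFb
  have h2k : (0:ℝ) ≤ 2/(k-1) := by positivity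
  nlinarith [mul_le_mul_of_nonneg_left hwsub h2k]

set_option maxHeartbeats 1000000 in
/-- Hardy's inequality, case `k > 1`. -/
theorem stmt_7 (k : ℝ) (hk : 1 < k) :
    ∃ C : ℝ, 0 < C ∧ ∀ g : ℝ → ℝ, DifferentiableOn ℝ g (Ioo 0 1) →
      IntegrableOn (fun s => s ^ k * (g s ^ 2 + deriv g s ^ 2)) (Ioo 0 1) →
      ∫ s in Ioo (0:ℝ) 1, s ^ (k - 2) * g s ^ 2
        ≤ C * ∫ s in Ioo (0:ℝ) 1, s ^ k * (g s ^ 2 + deriv g s ^ 2) := by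
  have hk1 : (0:ℝ) < k - 1 := by linarith
  have hP2 : (0:ℝ) < 2^(k+2) := Real.rpow_pos_of_pos two_pos _
  refine ⟨2^(k+2)/(k-1) + 4/(k-1)^2 + 4, by positivity, ?_⟩
  intro g hg hI
  have hiu1 := hardy_int_u k g hg hI
  have hiw1 := hardy_int_w k g hI
  set A1 : ℝ := ∫ s in Ioo (0:ℝ) 1, s ^ k * g s ^ 2 with hA1_def
  set A2 : ℝ := ∫ s in Ioo (0:ℝ) 1, s ^ k * deriv g s ^ 2 with hA2_def
  have hA : ∫ s in Ioo (0:ℝ) 1, s ^ k * (g s ^ 2 + deriv g s ^ 2) = A1 + A2 := by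
    rw [hA1_def, hA2_def, ← integral_add hiu1 hiw1]
    congr 1 with s
    ring
  have hA1 : 0 ≤ A1 := setIntegral_nonneg measurableSet_Ioo fun x hx =>
    mul_nonneg (Real.rpow_nonneg hx.1.le _) (sq_nonneg _)
  have hA2 : 0 ≤ A2 := setIntegral_nonneg measurableSet_Ioo fun x hx =>
    mul_nonneg (Real.rpow_nonneg hx.1.le _) (sq_nonneg _)
  rw [hA]
  by_cases hL : IntegrableOn (fun s => s ^ (k-2) * g s ^ 2) (Ioo 0 1)
  swap
  · rw [integral_undef hL]
    have hC : (0:ℝ) < 2^(k+2)/(k-1) + 4/(k-1)^2 + 4 := by positivity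
    nlinarith
  apply le_of_forall_pos_le_add
  intro ε hε
  set δ : ℝ := (k-1)*ε/2 with hδ_def
  have hδ : 0 < δ := by positivity
  have hP : (0:ℝ) < 2^(k+1) := Real.rpow_pos_of_pos two_pos _
  -- choose a good point b
  obtain ⟨b, hbmem, hgb⟩ : ∃ b ∈ Ioo (1/2:ℝ) 1, g b ^ 2 ≤ 2^(k+1)*A1 + δ := by
    by_contra hcon
    push_neg at hcon
    have hsub : Ioo (1/2:ℝ) 1 ⊆ Ioo (0:ℝ) 1 := fun x hx => ⟨by linarith [hx.1], hx.2⟩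
    have hge : (1/2:ℝ)^k * (volume (Ioo (1/2:ℝ) 1)).toReal * (2^(k+1)*A1 + δ)
        ≤ ∫ s in Ioo (1/2:ℝ) 1, s ^ k * g s ^ 2 := by
      have := setIntegral_ge_of_const_le (μ := volume)
        (f := fun s => s ^ k * g s ^ 2) (s := Ioo (1/2:ℝ) 1)
        (c := (1/2:ℝ)^k * (2^(k+1)*A1 + δ)) measurableSet_Ioo
        (by simp [Real.volume_Ioo]) ?_ (hiu1.mono_set hsub)
      · calc (1/2:ℝ)^k * (volume (Ioo (1/2:ℝ) 1)).toReal * (2^(k+1)*A1 + δ)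
            = (1/2:ℝ)^k * (2^(k+1)*A1 + δ) * (volume (Ioo (1/2:ℝ) 1)).toReal := by ring
          _ ≤ _ := by rw [smul_eq_mul, measureReal_def] at this; linarith
      · intro x hx
        have h1 : (1/2:ℝ)^k ≤ x^k := Real.rpow_le_rpow (by norm_num) hx.1.le (by linarith)
        have h2 : 2^(k+1)*A1 + δ ≤ g x ^2 := (hcon x hx).le
        have h3 : (0:ℝ) ≤ 2^(k+1)*A1 + δ := by positivity
        calc (1/2:ℝ)^k * (2^(k+1)*A1 + δ) ≤ x^k * (2^(k+1)*A1 + δ) :=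
              mul_le_mul_of_nonneg_right h1 h3
          _ ≤ x^k * g x^2 := mul_le_mul_of_nonneg_left h2
              (Real.rpow_nonneg (by linarith [hx.1]) _)
    have hle : ∫ s in Ioo (1/2:ℝ) 1, s ^ k * g s ^ 2 ≤ A1 := by
      apply setIntegral_mono_set hiu1
      · rw [Filter.EventuallyLE, ae_restrict_iff' measurableSet_Ioo]
        filter_upwards with x hx
        exact mul_nonneg (Real.rpow_nonneg hx.1.le _) (sq_nonneg _)
      · exact Filter.Eventually.of_forall hsub
    have hvol : (volume (Ioo (1/2:ℝ) 1)).toReal = 1/2 := by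
      rw [Real.volume_Ioo, ENNReal.toReal_ofReal (by norm_num)]
      norm_num
    rw [hvol] at hge
    have h12 : ((1:ℝ)/2)^k = (2^k)⁻¹ := by
      rw [one_div, Real.inv_rpow (by norm_num : (0:ℝ) ≤ 2)]
    have h2k1 : (2:ℝ)^(k+1) = 2^k * 2 := by
      rw [Real.rpow_add two_pos, Real.rpow_one]
    have hPk : (0:ℝ) < 2^k := Real.rpow_pos_of_pos two_pos _
    rw [h12, h2k1] at hge
    have heq2 : (2^k:ℝ)⁻¹ * (1/2) * (2^k*2*A1 + δ) = A1 + δ/(2^k*2) := by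
      field_simp
    rw [heq2] at hge
    have : 0 < δ/(2^k*2) := by positivity
    linarith
  have hb2 : (1/2:ℝ) < b := hbmem.1
  have hb1 : b < 1 := hbmem.2
  have hb0 : (0:ℝ) < b := by linarith
  -- bound the integral over (0, b) via a monotone limit
  set K : ℝ := 2/(k-1) * (g b^2 + 2/(k-1)*A2) with hK_def
  have hIobsub : Ioo (0:ℝ) b ⊆ Ioo (0:ℝ) 1 := fun x hx => ⟨hx.1, hx.2.trans hb1⟩
  have hIob : ∫ s in Ioo (0:ℝ) b, s ^ (k-2) * g s ^ 2 ≤ K := by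
    set S : ℕ → Set ℝ := fun n => Ioo (b/(n+2)) b with hS_def
    have hSmeas : ∀ n, MeasurableSet (S n) := fun n => measurableSet_Ioo
    have hSmono : Monotone S := by
      intro n m hnm x hx
      refine ⟨lt_of_le_of_lt ?_ hx.1, hx.2⟩
      apply div_le_div_of_nonneg_left hb0.le (by positivity)
      push_cast
      linarith [(Nat.cast_le (α := ℝ)).mpr hnm]
    have hUnion : ⋃ n, S n = Ioo (0:ℝ) b := by
      ext x
      simp only [hS_def, mem_iUnion, mem_Ioo]
      constructor
      · rintro ⟨n, h1, h2⟩
        exact ⟨lt_trans (by positivity) h1, h2⟩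
      · rintro ⟨hx0, hxb⟩
        obtain ⟨n, hn⟩ := exists_nat_gt (b/x)
        refine ⟨n, ?_, hxb⟩
        rw [div_lt_iff₀ (by positivity)]
        rw [div_lt_iff₀ hx0] at hn
        nlinarith
      -- goal: b < x * (n+2)
    have htend := tendsto_setIntegral_of_monotone hSmeas hSmono
      (f := fun s => s ^ (k-2) * g s ^ 2) (μ := volume)
      (by rw [hUnion]; exact hL.mono_set hIobsub)
    rw [hUnion] at htend
    apply le_of_tendsto htend
    filter_upwards with n
    have han : 0 < b/((n:ℝ)+2) := by positivity
    have habn : b/((n:ℝ)+2) < b := div_lt_self hb0 (by push_cast; linarith [Nat.cast_nonneg (α := ℝ) n])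
    have hkey := hardy_key k hk g hg hI (b/((n:ℝ)+2)) b han habn hb1
    have hX : ∫ s in S n, s ^ (k-2) * g s ^ 2
        = (2/(k-1)) * (((k-1)/2) * ∫ s in S n, s ^ (k-2) * g s ^ 2) := by
      field_simp
    rw [hX, hK_def]
    exact mul_le_mul_of_nonneg_left hkey (by positivity)
  -- the tail over [b, 1)
  have hsub1 : Ioo b 1 ⊆ Ioo (0:ℝ) 1 := fun x hx => ⟨lt_trans hb0 hx.1, hx.2⟩
  have hIco : Ico b 1 ⊆ Ioo (0:ℝ) 1 := fun x hx => ⟨lt_of_lt_of_le hb0 hx.1, hx.2⟩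
  have htail : ∫ s in Ico b 1, s ^ (k-2) * g s ^ 2 ≤ 4*A1 := by
    rw [integral_Ico_eq_integral_Ioo]
    have hpt : ∀ s ∈ Ioo b 1, s ^ (k-2) * g s ^ 2 ≤ 4*(s^k * g s^2) := by
      intro s hs
      have hs0 : (0:ℝ) < s := lt_trans hb0 hs.1
      have h1 : s^(k-2) * s^2 = s^k := by
        rw [show (s:ℝ)^2 = s^((2:ℕ):ℝ) by rw [Real.rpow_natCast],
          ← Real.rpow_add hs0]
        norm_num
      have h48 : (0:ℝ) ≤ 4*s^2 - 1 := by nlinarith [hs.1, hb2]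
      have hug : (0:ℝ) ≤ s^(k-2) * g s^2 :=
        mul_nonneg (Real.rpow_nonneg hs0.le _) (sq_nonneg _)
      nlinarith [mul_nonneg h48 hug]
    calc ∫ s in Ioo b 1, s ^ (k-2) * g s ^ 2
        ≤ ∫ s in Ioo b 1, 4*(s^k * g s^2) :=
          setIntegral_mono_on (hL.mono_set hsub1)
            ((hiu1.mono_set hsub1).const_mul 4) measurableSet_Ioo hpt
      _ = 4 * ∫ s in Ioo b 1, s^k * g s^2 := integral_const_mul _ _
      _ ≤ 4 * A1 := by
          apply mul_le_mul_of_nonneg_left _ (by norm_num : (0:ℝ) ≤ 4)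
          apply setIntegral_mono_set hiu1
          · filter_upwards [ae_restrict_mem measurableSet_Ioo] with x hx
            exact mul_nonneg (Real.rpow_nonneg hx.1.le _) (sq_nonneg _)
          · exact Filter.Eventually.of_forall hsub1
  -- split the integral
  have hdisj : Disjoint (Ioo (0:ℝ) b) (Ico b 1) := by
    rw [Set.disjoint_left]
    rintro x ⟨_, h1⟩ ⟨h2, _⟩
    exact absurd h1 (not_lt.mpr h2)
  have hIsplit : ∫ s in Ioo (0:ℝ) 1, s ^ (k-2) * g s ^ 2
      = (∫ s in Ioo (0:ℝ) b, s ^ (k-2) * g s ^ 2)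
        + ∫ s in Ico b 1, s ^ (k-2) * g s ^ 2 := by
    rw [← setIntegral_union hdisj measurableSet_Ico (hL.mono_set hIobsub)
      (hL.mono_set hIco), Ioo_union_Ico_eq_Ioo hb0 hb1.le]
  -- final arithmetic
  have hC2 : (2:ℝ)^(k+2) = 2*2^(k+1) := by
    rw [show k+2 = 1+(k+1) by ring, Real.rpow_add two_pos, Real.rpow_one]
  have hKb : K ≤ 2^(k+2)/(k-1)*A1 + ε + 4/(k-1)^2*A2 := by
    rw [hK_def]
    calc 2/(k-1) * (g b^2 + 2/(k-1)*A2)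
        ≤ 2/(k-1) * ((2^(k+1)*A1 + δ) + 2/(k-1)*A2) := by
          apply mul_le_mul_of_nonneg_left (by linarith) (by positivity)
      _ = 2^(k+2)/(k-1)*A1 + ε + 4/(k-1)^2*A2 := by
          rw [hδ_def, hC2]
          field_simp
          ring
  rw [hIsplit]
  have h1 : (0:ℝ) ≤ 2^(k+2)/(k-1) := by positivity
  have h2 : (0:ℝ) ≤ 4/(k-1)^2 := by positivity
  nlinarith [mul_nonneg h1 hA2, mul_nonneg h2 hA1, hA1, hA2]
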